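/- For every k ≥ 1, every γ ∈ (0,1], and every h ∈ Δ_k, let q = Π(h/γ) and let m = #{j ∈ {1,…,k} : q_j > 0} be the number of nonzero coordinates of q. Then for every index i with q_i = 0, it holds that h_i ≤ (1 − γ)/m. -/

import Mathlib

open scoped BigOperators

/-- The probability simplex in `ℝ^k`. -/
def simplex (k : ℕ) : Set (EuclideanSpace ℝ (Fin k)) :=
  {p | (∀ i, 0 ≤ p i) ∧ ∑ i, p i = 1}

/-- `q` is the Euclidean (L2) metric projection of `x` onto the probability simplex. -/
def IsL2ProjOnSimplex (k : ℕ) (x q : EuclideanSpace ℝ (Fin k)) : Prop :=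
  q ∈ simplex k ∧ ∀ r ∈ simplex k, ‖q - x‖ ≤ ‖r - x‖

lemma simplex_convex (k : ℕ) : Convex ℝ (simplex k) := by
  intro p hp r hr a b ha hb hab
  refine ⟨fun i => ?_, ?_⟩
  · have := hp.1 i
    have := hr.1 i
    simp only [PiLp.add_apply, PiLp.smul_apply, smul_eq_mul]
    nlinarith
  · simp only [PiLp.add_apply, PiLp.smul_apply, smul_eq_mul]
    rw [Finset.sum_add_distrib, ← Finset.mul_sum, ← Finset.mul_sum, hp.2, hr.2]
    linarith

lemma proj_vi (k : ℕ) (x q : EuclideanSpace ℝ (Fin k))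
    (hq : IsL2ProjOnSimplex k x q) :
    ∀ w ∈ simplex k, inner ℝ (x - q) (w - q) ≤ (0 : ℝ) := by
  haveI : Nonempty ↑(simplex k) := ⟨⟨q, hq.1⟩⟩
  have bdd : BddBelow (Set.range fun w : simplex k => ‖x - (w : EuclideanSpace ℝ (Fin k))‖) :=
    ⟨0, by rintro b ⟨w, rfl⟩; exact norm_nonneg _⟩
  have heq : ‖x - q‖ = ⨅ w : simplex k, ‖x - (w : EuclideanSpace ℝ (Fin k))‖ := by
    refine le_antisymm (le_ciInf fun w => ?_) (ciInf_le bdd ⟨q, hq.1⟩)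
    rw [norm_sub_rev, norm_sub_rev x]
    exact hq.2 w w.2
  exact (norm_eq_iInf_iff_real_inner_le_zero (simplex_convex k) hq.1).mp heq

/-- for `γ ∈ (0,1]`, `h ∈ Δ_k`, `q = Π(h/γ)` and `m` the number of nonzero
coordinates of `q`: every index `i` with `q i = 0` satisfies `h i ≤ (1 − γ)/m`. -/
theorem stmt_9 (k : ℕ) (hk : 1 ≤ k) (γ : ℝ) (hγ : γ ∈ Set.Ioc (0 : ℝ) 1)
    (h : EuclideanSpace ℝ (Fin k)) (hh : h ∈ simplex k)
    (q : EuclideanSpace ℝ (Fin k)) (hq : IsL2ProjOnSimplex k (γ⁻¹ • h) q)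
    (m : ℕ) (hm : m = (Finset.univ.filter fun j => 0 < q j).card) :
    ∀ i, q i = 0 → h i ≤ (1 - γ) / (m : ℝ) := by
  obtain ⟨hγ0, hγ1⟩ := hγ
  set x : EuclideanSpace ℝ (Fin k) := γ⁻¹ • h with hx
  have vi := proj_vi k x q hq
  intro i hqi
  set S : Finset (Fin k) := Finset.univ.filter fun j => 0 < q j with hS
  -- key pointwise inequality
  have key : ∀ j ∈ S, x i + q j ≤ x j := by
    intro j hj
    have hqj : 0 < q j := by simpa [hS] using hj
    have hij : i ≠ j := by intro e; rw [e] at hqi; linarith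
    set w : EuclideanSpace ℝ (Fin k) :=
      q + q j • (EuclideanSpace.single i (1:ℝ) - EuclideanSpace.single j (1:ℝ)) with hw
    have hwapp : ∀ t, w t = q t + q j * ((if t = i then (1:ℝ) else 0) - if t = j then 1 else 0) := by
      intro t
      simp [hw, PiLp.add_apply, PiLp.smul_apply, PiLp.sub_apply, EuclideanSpace.single_apply,
        smul_eq_mul]
    have hwmem : w ∈ simplex k := by
      constructor
      · intro t
        rw [hwapp t]
        have hqt := hq.1.1 t
        rcases eq_or_ne t i with rfl | hit
        · simp [hij, Ne.symm hij]
          nlinarith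
        · rcases eq_or_ne t j with rfl | hjt
          · simp [hit]
          · simp [hit, hjt]
            linarith
      · have hws : ∑ t, w t = ∑ t, q t + q j * ((∑ t, if t = i then (1:ℝ) else 0)
            - ∑ t, if t = j then (1:ℝ) else 0) := by
          rw [Finset.sum_congr rfl fun t _ => hwapp t, Finset.sum_add_distrib,
            ← Finset.mul_sum, Finset.sum_sub_distrib]
        rw [hws, hq.1.2]
        simp
    have hinner := vi w hwmem
    have hwq : w - q = q j • (EuclideanSpace.single i (1:ℝ) - EuclideanSpace.single j (1:ℝ)) := by
      rw [hw]; abel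
    rw [hwq, real_inner_smul_right, inner_sub_right] at hinner
    have h1 : inner ℝ (x - q) (EuclideanSpace.single i (1:ℝ)) = (x - q) i := by
      rw [real_inner_comm, EuclideanSpace.inner_single_left]
      simp
    have h2 : inner ℝ (x - q) (EuclideanSpace.single j (1:ℝ)) = (x - q) j := by
      rw [real_inner_comm, EuclideanSpace.inner_single_left]
      simp
    rw [h1, h2] at hinner
    have hsub : ∀ t, (x - q) t = x t - q t := fun t => rfl
    rw [hsub i, hsub j, hqi] at hinner
    nlinarith
  -- sum the inequality over S
  have hsum : ∑ j ∈ S, (x i + q j) ≤ ∑ j ∈ S, x j := Finset.sum_le_sum key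
  have hqS : ∑ j ∈ S, q j = 1 := by
    rw [← hq.1.2]
    apply Finset.sum_subset (Finset.subset_univ S)
    intro t _ ht
    have h1 : ¬ 0 < q t := by simpa [hS] using ht
    linarith [hq.1.1 t]
  have hxS : ∑ j ∈ S, x j ≤ γ⁻¹ := by
    have : ∑ j ∈ S, x j = γ⁻¹ * ∑ j ∈ S, h j := by
      simp [hx, PiLp.smul_apply, smul_eq_mul, Finset.mul_sum]
    rw [this]
    have hle : ∑ j ∈ S, h j ≤ 1 := by
      rw [← hh.2]
      exact Finset.sum_le_sum_of_subset_of_nonneg (Finset.subset_univ S)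
        (fun t _ _ => hh.1 t)
    have : 0 < γ⁻¹ := by positivity
    nlinarith
  have hmS : (m : ℝ) = S.card := by rw [hm]
  have hmpos : 0 < (m : ℝ) := by
    rw [hmS]
    have : S.Nonempty := by
      by_contra hne
      rw [Finset.not_nonempty_iff_eq_empty] at hne
      rw [hne] at hqS
      simp at hqS
    exact_mod_cast Finset.card_pos.mpr this
  have hlhs : ∑ j ∈ S, (x i + q j) = S.card * x i + 1 := by
    rw [Finset.sum_add_distrib, hqS, Finset.sum_const, nsmul_eq_mul]
  rw [hlhs] at hsum
  have hxi : x i = γ⁻¹ * h i := by simp [hx, PiLp.smul_apply, smul_eq_mul]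
  rw [hxi] at hsum
  rw [← hmS] at hsum
  -- now: m * (γ⁻¹ * h i) + 1 ≤ γ⁻¹, conclude
  have hmain : (m : ℝ) * (γ⁻¹ * h i) + 1 ≤ γ⁻¹ := le_trans hsum hxS
  rw [le_div_iff₀ hmpos]
  have hcancel : γ * γ⁻¹ = 1 := mul_inv_cancel₀ hγ0.ne'
  nlinarith [hmain, hγ0, hcancel]
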